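/- Let $N, k \ge 1$, let $d_1,\dots,d_N, R$ be positive integers, and let $\mathcal{X} \in \mathbb{R}^{d_1 \times \cdots \times d_N}$ be a fixed tensor. Let $\mathcal{T}_1, \dots, \mathcal{T}_k$ be independent tensor train tensors, each of the form $\mathcal{T}_i = [\![\mathcal{G}^{1,i}, \dots, \mathcal{G}^{N,i}]\!]$ where all core entries are i.i.d. Rademacher random variables, and define the tensorized Rademacher random projection $f^{TT}_R : \mathbb{R}^{d_1 \times \cdots \times d_N} \to \mathbb{R}^k$ component-wise by $(f^{TT}_R(\mathcal{X}))_i = \frac{1}{\sqrt{k R^{N-1}}} \langle \mathcal{T}_i, \mathcal{X} \rangle$ for $i \in [k]$. Then $\mathbb{E}\,\|f^{TT}_R(\mathcal{X})\|_2^2 = \|\mathcal{X}\|_F^2$. -/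

import Mathlib

open MeasureTheory ProbabilityTheory Matrix Finset

noncomputable section

/-- The Rademacher distribution on `ℝ`: uniform on `{1, -1}`. -/
def radDist : Measure ℝ :=
  (2⁻¹ : ENNReal) • Measure.dirac (1 : ℝ) + (2⁻¹ : ENNReal) • Measure.dirac (-1 : ℝ)

/-- Path-sum contraction of tensor-train cores `G` at multi-index `i`, with the
two boundary bond indices fixed to `a` and `b`. -/
def ttPath {N : ℕ} (d : Fin N → ℕ) (ρ : Fin (N + 1) → ℕ)
    (G : (n : Fin N) → Fin (ρ n.castSucc) → Fin (d n) → Fin (ρ n.succ) → ℝ)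
    (i : (n : Fin N) → Fin (d n)) (a : Fin (ρ 0)) (b : Fin (ρ (Fin.last N))) : ℝ :=
  ∑ r : ((n : Fin (N + 1)) → Fin (ρ n)),
    if r 0 = a ∧ r (Fin.last N) = b then
      ∏ n : Fin N, G n (r n.castSucc) (i n) (r n.succ)
    else 0

/-! ### Auxiliary lemmas -/

lemma TTAux.integrable_dirac'' {f : ℝ → ℝ} (hf : Measurable f) (a : ℝ) :
    Integrable f (Measure.dirac a) := by
  refine ⟨hf.aestronglyMeasurable, ?_⟩
  rw [HasFiniteIntegral, lintegral_dirac' _ (by fun_prop)]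
  exact ENNReal.coe_lt_top

lemma TTAux.radDist_integral_pow (m : ℕ) :
    ∫ x : ℝ, x ^ m ∂radDist = if Even m then 1 else 0 := by
  have h1 := (TTAux.integrable_dirac'' (f := fun x : ℝ => x ^ m) (by fun_prop) 1).smul_measure
    (c := (2⁻¹ : ENNReal)) (by simp)
  have h2 := (TTAux.integrable_dirac'' (f := fun x : ℝ => x ^ m) (by fun_prop) (-1)).smul_measure
    (c := (2⁻¹ : ENNReal)) (by simp)
  rw [radDist, integral_add_measure h1 h2, integral_smul_measure, integral_smul_measure,
    integral_dirac, integral_dirac]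
  have : ((2⁻¹ : ENNReal)).toReal = 2⁻¹ := by simp
  rw [this, one_pow]
  rcases Nat.even_or_odd m with h | h
  · rw [h.neg_one_pow, if_pos h]; norm_num
  · rw [h.neg_one_pow, if_neg (by simpa using h)]; norm_num

lemma TTAux.radDist_abs_le {Ω : Type} [MeasurableSpace Ω] {μ : Measure Ω} {W : Ω → ℝ}
    (hm : Measurable W) (hd : Measure.map W μ = radDist) : ∀ᵐ ω ∂μ, |W ω| ≤ 1 := by
  have hs : MeasurableSet {x : ℝ | 1 < |x|} := by
    have : Measurable fun x : ℝ => |x| := by fun_prop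
    exact this measurableSet_Ioi
  have : μ (W ⁻¹' {x : ℝ | 1 < |x|}) = 0 := by
    rw [← Measure.map_apply hm hs, hd]
    simp [radDist, Measure.dirac_apply' _ hs]
  filter_upwards [measure_eq_zero_iff_ae_notMem.mp this] with ω h
  simpa using h

lemma TTAux.integrable_prod_of_abs_le {Ω : Type} [MeasurableSpace Ω] {μ : Measure Ω}
    [IsProbabilityMeasure μ] {ι : Type} (Z : ι → Ω → ℝ) (hmeas : ∀ i, Measurable (Z i))
    (hbd : ∀ i, ∀ᵐ ω ∂μ, |Z i ω| ≤ 1) (s : Finset ι) :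
    Integrable (fun ω => ∏ i ∈ s, Z i ω) μ := by
  refine Integrable.mono' (integrable_const 1)
    (Finset.measurable_prod s (fun i _ => hmeas i)).aestronglyMeasurable ?_
  have : ∀ᵐ ω ∂μ, ∀ i ∈ s, |Z i ω| ≤ 1 := (ae_ball_iff s.countable_toSet).mpr fun i _ => hbd i
  filter_upwards [this] with ω h
  rw [Real.norm_eq_abs, Finset.abs_prod]
  exact Finset.prod_le_one (fun i _ => abs_nonneg _) h

lemma TTAux.integral_prod_of_indep {Ω : Type} [MeasurableSpace Ω] {μ : Measure Ω}
    [IsProbabilityMeasure μ] {ι : Type} [DecidableEq ι] (Z : ι → Ω → ℝ)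
    (hmeas : ∀ i, Measurable (Z i)) (hbd : ∀ i, ∀ᵐ ω ∂μ, |Z i ω| ≤ 1)
    (hind : iIndepFun Z μ) (s : Finset ι) :
    ∫ ω, ∏ i ∈ s, Z i ω ∂μ = ∏ i ∈ s, ∫ ω, Z i ω ∂μ := by
  induction s using Finset.induction_on with
  | empty => simp
  | @insert a s ha ih =>
    simp only [Finset.prod_insert ha]; rw [← ih]
    have hindep : IndepFun (∏ j ∈ s, Z j) (Z a) μ :=
      hind.indepFun_finsetProd_of_notMem hmeas ha
    have h1 : Integrable (Z a) μ := by
      have := TTAux.integrable_prod_of_abs_le Z hmeas hbd {a}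
      simpa using this
    have hfn : (∏ j ∈ s, Z j) = fun ω => ∏ i ∈ s, Z i ω := by
      funext ω; simp
    have h2 : Integrable (∏ j ∈ s, Z j) μ := by
      rw [hfn]; exact TTAux.integrable_prod_of_abs_le Z hmeas hbd s
    have := hindep.symm.integral_mul_eq_mul_integral h1.aestronglyMeasurable h2.aestronglyMeasurable
    rw [hfn] at this
    simpa using this

namespace TTAux
variable {N : ℕ} (d : Fin N → ℕ) (ρ : Fin (N + 1) → ℕ)

abbrev Sig := Σ n : Fin N, Fin (ρ n.castSucc) × Fin (d n) × Fin (ρ n.succ)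

def trip (i : (n : Fin N) → Fin (d n)) (r : (n : Fin (N + 1)) → Fin (ρ n)) (n : Fin N) :
    Fin (ρ n.castSucc) × Fin (d n) × Fin (ρ n.succ) :=
  (r n.castSucc, i n, r n.succ)

variable (k : ℕ)

def mult1 (κ : Fin k) (i : (n : Fin N) → Fin (d n)) (r : (n : Fin (N + 1)) → Fin (ρ n))
    (p : Fin k × Sig d ρ) : ℕ :=
  if p.1 = κ ∧ p.2.2 = trip d ρ i r p.2.1 then 1 else 0

def mult (κ : Fin k) (i j : (n : Fin N) → Fin (d n)) (r s : (n : Fin (N + 1)) → Fin (ρ n))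
    (p : Fin k × Sig d ρ) : ℕ :=
  mult1 d ρ k κ i r p + mult1 d ρ k κ j s p

lemma prod_pow_mult1 (Y : Fin k × Sig d ρ → ℝ) (κ : Fin k) (i : (n : Fin N) → Fin (d n))
    (r : (n : Fin (N + 1)) → Fin (ρ n)) :
    ∏ p, Y p ^ mult1 d ρ k κ i r p = ∏ n : Fin N, Y (κ, ⟨n, trip d ρ i r n⟩) := by
  rw [Fintype.prod_prod_type]
  have : ∀ κ' : Fin k, ∏ σ : Sig d ρ, Y (κ', σ) ^ mult1 d ρ k κ i r (κ', σ) =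
      if κ' = κ then ∏ n : Fin N, Y (κ', ⟨n, trip d ρ i r n⟩) else 1 := by
    intro κ'
    rw [← Finset.univ_sigma_univ, Finset.prod_sigma]
    simp only [mult1, ite_and, pow_ite, pow_one, pow_zero, Finset.prod_ite_irrel,
      Finset.prod_ite_eq', Finset.mem_univ, if_true, Finset.prod_const_one]
  simp only [this, Finset.prod_ite_eq', Finset.mem_univ, if_true]

lemma parity_prod (hρlast : ρ (Fin.last N) = 1) (κ : Fin k)
    (i j : (n : Fin N) → Fin (d n)) (r s : (n : Fin (N + 1)) → Fin (ρ n)) :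
    (∏ p : Fin k × Sig d ρ, if Even (mult d ρ k κ i j r s p) then (1 : ℝ) else 0) =
      if i = j ∧ r = s then 1 else 0 := by
  by_cases h : i = j ∧ r = s
  · obtain ⟨rfl, rfl⟩ := h
    rw [if_pos ⟨rfl, rfl⟩]
    apply Finset.prod_eq_one
    intro p _
    rw [if_pos]
    exact Even.add_self _
  · rw [if_neg h]
    have hex : ∃ n, trip d ρ i r n ≠ trip d ρ j s n := by
      by_contra hall
      push_neg at hall
      refine h ⟨funext fun n => congrArg (fun t => t.2.1) (hall n), funext fun m => ?_⟩
      by_cases hm : m = Fin.last N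
      · subst hm
        have h1 : (r (Fin.last N)).val < 1 := hρlast ▸ (r (Fin.last N)).isLt
        have h2 : (s (Fin.last N)).val < 1 := hρlast ▸ (s (Fin.last N)).isLt
        exact Fin.ext (by omega)
      · have hcs : (m.castPred hm).castSucc = m := Fin.castSucc_castPred m hm
        obtain ⟨m', rfl⟩ : ∃ m', Fin.castSucc m' = m := ⟨m.castPred hm, hcs⟩
        have := congrArg Prod.fst (hall m')
        simpa [trip] using this
    obtain ⟨n, hn⟩ := hex
    refine Finset.prod_eq_zero (Finset.mem_univ (κ, ⟨n, trip d ρ i r n⟩)) ?_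
    have hm1 : mult d ρ k κ i j r s (κ, ⟨n, trip d ρ i r n⟩) = 1 := by
      simp [mult, mult1, hn]
    rw [hm1]
    simp [Nat.not_even_one]

lemma prod_rho (hN : 1 ≤ N) (hρ0 : ρ 0 = 1) (hρlast : ρ (Fin.last N) = 1) (R : ℕ)
    (hρmid : ∀ n : Fin (N + 1), n ≠ 0 → n ≠ Fin.last N → ρ n = R) :
    ∏ n : Fin (N + 1), ρ n = R ^ (N - 1) := by
  classical
  have h0last : (0 : Fin (N + 1)) ≠ Fin.last N := by
    simp [Fin.ext_iff]; omega
  rw [← Finset.prod_filter_mul_prod_filter_not Finset.univ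
    (fun n => n = 0 ∨ n = Fin.last N) ρ]
  have hfil : Finset.univ.filter (fun n : Fin (N+1) => n = 0 ∨ n = Fin.last N)
      = {0, Fin.last N} := by
    ext n; simp
  have hcard2 : (Finset.univ.filter (fun n : Fin (N+1) => n = 0 ∨ n = Fin.last N)).card = 2 := by
    rw [hfil, Finset.card_insert_of_notMem (by simpa using h0last), Finset.card_singleton]
  have h1 : ∏ n ∈ Finset.univ.filter (fun n : Fin (N+1) => n = 0 ∨ n = Fin.last N), ρ n = 1 := by
    rw [hfil, Finset.prod_pair h0last, hρ0, hρlast]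
    norm_num
  have hcardmid : (Finset.univ.filter (fun n : Fin (N+1) => ¬(n = 0 ∨ n = Fin.last N))).card
      = N - 1 := by
    have := Finset.card_filter_add_card_filter_not (s := Finset.univ)
      (p := fun n : Fin (N+1) => n = 0 ∨ n = Fin.last N)
    rw [hcard2, Finset.card_univ, Fintype.card_fin] at this
    omega
  have h2 : ∏ n ∈ Finset.univ.filter (fun n : Fin (N+1) => ¬(n = 0 ∨ n = Fin.last N)), ρ n
      = R ^ (N - 1) := by
    calc ∏ n ∈ Finset.univ.filter (fun n : Fin (N+1) => ¬(n = 0 ∨ n = Fin.last N)), ρ n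
        = ∏ _n ∈ Finset.univ.filter (fun n : Fin (N+1) => ¬(n = 0 ∨ n = Fin.last N)), R :=
          Finset.prod_congr rfl (fun n hn => by
            simp only [Finset.mem_filter] at hn
            push_neg at hn
            exact hρmid n hn.2.1 hn.2.2)
      _ = R ^ (N - 1) := by rw [Finset.prod_const, hcardmid]
  rw [h1, h2, one_mul]

lemma sq_sum_mul (c : ℝ) {α : Type} [Fintype α] (t : α → ℝ) :
    (c * ∑ u, t u) ^ 2 = ∑ u, ∑ v, c ^ 2 * (t u * t v) := by
  conv_lhs => rw [mul_pow]
  rw [show (∑ u, t u) ^ 2 = (∑ u, t u) * (∑ u, t u) from sq _, Finset.sum_mul_sum,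
    Finset.mul_sum]
  exact Finset.sum_congr rfl fun u _ => by rw [Finset.mul_sum]

end TTAux

/-- Expected isometry of the tensorized Rademacher random projection `f^TT_R`:
`𝔼 ‖f^TT_R(𝒳)‖₂² = ‖𝒳‖_F²`. -/
theorem tt_rademacher_rp_expected_isometry
    {Ω : Type} [MeasurableSpace Ω] (μ : Measure Ω) [IsProbabilityMeasure μ]
    (N k : ℕ) (hN : 1 ≤ N) (hk : 1 ≤ k)
    (d : Fin N → ℕ) (hd : ∀ n, 0 < d n) (R : ℕ) (hR : 0 < R)
    (ρ : Fin (N + 1) → ℕ) (hρ0 : ρ 0 = 1) (hρlast : ρ (Fin.last N) = 1)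
    (hρmid : ∀ n : Fin (N + 1), n ≠ 0 → n ≠ Fin.last N → ρ n = R)
    (X : ((n : Fin N) → Fin (d n)) → ℝ)
    (G : Ω → Fin k → (n : Fin N) → Fin (ρ n.castSucc) → Fin (d n) → Fin (ρ n.succ) → ℝ)
    (hGmeas : ∀ κ n a i b, Measurable (fun ω => G ω κ n a i b))
    (hGdist : ∀ κ n a i b, Measure.map (fun ω => G ω κ n a i b) μ = radDist)
    (hGindep : iIndepFun
      (fun p : Fin k × (Σ n : Fin N, Fin (ρ n.castSucc) × Fin (d n) × Fin (ρ n.succ)) =>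
        fun ω => G ω p.1 p.2.1 p.2.2.1 p.2.2.2.1 p.2.2.2.2) μ)
    (f : Ω → Fin k → ℝ)
    (hf : ∀ ω κ, f ω κ = (1 / Real.sqrt ((k : ℝ) * (R : ℝ) ^ (N - 1))) *
      ∑ i, X i * ∑ a, ∑ b, ttPath d ρ (G ω κ) i a b) :
    ∫ ω, ∑ κ, (f ω κ) ^ 2 ∂μ = ∑ i, (X i) ^ 2 := by
  classical
  set c : ℝ := 1 / Real.sqrt ((k : ℝ) * (R : ℝ) ^ (N - 1)) with hcdef
  have hYmeas : ∀ p : Fin k × TTAux.Sig d ρ,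
      Measurable (fun ω => G ω p.1 p.2.1 p.2.2.1 p.2.2.2.1 p.2.2.2.2) :=
    fun p => hGmeas _ _ _ _ _
  have hbd : ∀ p : Fin k × TTAux.Sig d ρ,
      ∀ᵐ ω ∂μ, |G ω p.1 p.2.1 p.2.2.1 p.2.2.2.1 p.2.2.2.2| ≤ 1 :=
    fun p => TTAux.radDist_abs_le (hYmeas p) (hGdist _ _ _ _ _)
  -- Step 1: collapse the boundary sums in `ttPath`.
  have hstep1 : ∀ ω κ (i : (n : Fin N) → Fin (d n)),
      (∑ a, ∑ b, ttPath d ρ (G ω κ) i a b)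
        = ∑ r : (n : Fin (N + 1)) → Fin (ρ n),
            ∏ n, G ω κ n (r n.castSucc) (i n) (r n.succ) := by
    intro ω κ i
    have inner : ∀ a : Fin (ρ 0), (∑ b, ttPath d ρ (G ω κ) i a b)
        = ∑ r : (n : Fin (N + 1)) → Fin (ρ n),
            if r 0 = a then ∏ n, G ω κ n (r n.castSucc) (i n) (r n.succ) else 0 := by
      intro a
      simp only [ttPath]
      rw [Finset.sum_comm]
      exact Finset.sum_congr rfl fun r _ => by simp [ite_and]
    simp only [inner]
    rw [Finset.sum_comm]
    exact Finset.sum_congr rfl fun r _ => by simp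
  -- Step 2: `f` as a single sum over pairs.
  have hf2 : ∀ ω κ, f ω κ = c *
      ∑ u : (((n : Fin N) → Fin (d n)) × ((n : Fin (N + 1)) → Fin (ρ n))),
        X u.1 * ∏ n, G ω κ n (u.2 n.castSucc) (u.1 n) (u.2 n.succ) := by
    intro ω κ
    rw [hf ω κ]
    congr 1
    conv_rhs => rw [Fintype.sum_prod_type]
    exact Finset.sum_congr rfl fun i _ => by rw [hstep1 ω κ i, Finset.mul_sum]
  -- Step 3: expand the square into monomials indexed by q.
  have key : ∀ ω, (∑ κ, f ω κ ^ 2)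
      = ∑ q : Fin k × (((((n : Fin N) → Fin (d n)) × ((n : Fin (N + 1)) → Fin (ρ n))))
            × ((((n : Fin N) → Fin (d n)) × ((n : Fin (N + 1)) → Fin (ρ n))))),
          (c ^ 2 * (X q.2.1.1 * X q.2.2.1)) *
            ∏ p : Fin k × TTAux.Sig d ρ,
              (G ω p.1 p.2.1 p.2.2.1 p.2.2.2.1 p.2.2.2.2) ^
                (TTAux.mult d ρ k q.1 q.2.1.1 q.2.2.1 q.2.1.2 q.2.2.2 p) := by
    intro ω
    rw [Fintype.sum_prod_type]
    refine Finset.sum_congr rfl fun κ _ => ?_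
    rw [hf2 ω κ, TTAux.sq_sum_mul]
    conv_rhs => rw [Fintype.sum_prod_type]
    refine Finset.sum_congr rfl fun u _ => ?_
    refine Finset.sum_congr rfl fun v _ => ?_
    have hprod : (∏ p : Fin k × TTAux.Sig d ρ,
          (G ω p.1 p.2.1 p.2.2.1 p.2.2.2.1 p.2.2.2.2) ^
            (TTAux.mult d ρ k κ u.1 v.1 u.2 v.2 p))
        = (∏ n, G ω κ n (u.2 n.castSucc) (u.1 n) (u.2 n.succ)) *
          (∏ n, G ω κ n (v.2 n.castSucc) (v.1 n) (v.2 n.succ)) := by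
      simp only [TTAux.mult, pow_add, Finset.prod_mul_distrib]
      rw [TTAux.prod_pow_mult1 d ρ k _ κ u.1 u.2, TTAux.prod_pow_mult1 d ρ k _ κ v.1 v.2]
      rfl
    rw [hprod]
    ring
  -- Step 4: integrability and moments.
  have hIntProd : ∀ mm : (Fin k × TTAux.Sig d ρ) → ℕ,
      Integrable (fun ω => ∏ p, (G ω p.1 p.2.1 p.2.2.1 p.2.2.2.1 p.2.2.2.2) ^ mm p) μ :=
    fun mm => TTAux.integrable_prod_of_abs_le _ (fun p => (hYmeas p).pow_const _)
      (fun p => (hbd p).mono fun ω h => by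
        rw [abs_pow]; exact pow_le_one₀ (abs_nonneg _) h) Finset.univ
  have hmom : ∀ mm : (Fin k × TTAux.Sig d ρ) → ℕ,
      (∫ ω, ∏ p, (G ω p.1 p.2.1 p.2.2.1 p.2.2.2.1 p.2.2.2.2) ^ mm p ∂μ)
        = ∏ p, (if Even (mm p) then (1 : ℝ) else 0) := by
    intro mm
    have hind2 : iIndepFun
        (fun (p : Fin k × TTAux.Sig d ρ) (ω : Ω) =>
          (G ω p.1 p.2.1 p.2.2.1 p.2.2.2.1 p.2.2.2.2) ^ mm p) μ :=
      hGindep.comp (fun p (x : ℝ) => x ^ mm p) (fun p => measurable_id.pow_const _)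
    rw [TTAux.integral_prod_of_indep _ (fun p => (hYmeas p).pow_const _)
      (fun p => (hbd p).mono fun ω h => by
        rw [abs_pow]; exact pow_le_one₀ (abs_nonneg _) h)
      hind2 Finset.univ]
    refine Finset.prod_congr rfl fun p _ => ?_
    have hmap := integral_map (φ := fun ω => G ω p.1 p.2.1 p.2.2.1 p.2.2.2.1 p.2.2.2.2)
      (μ := μ) (hYmeas p).aemeasurable (f := fun x : ℝ => x ^ mm p)
      (Measurable.aestronglyMeasurable (by fun_prop))
    rw [hGdist p.1 p.2.1 p.2.2.1 p.2.2.2.1 p.2.2.2.2] at hmap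
    rw [← hmap, TTAux.radDist_integral_pow]
  -- Step 5: counting.
  have hkpos : (0 : ℝ) < (k : ℝ) := by exact_mod_cast hk
  have hRpos : (0 : ℝ) < (R : ℝ) := by exact_mod_cast hR
  have hx : (0 : ℝ) < (k : ℝ) * (R : ℝ) ^ (N - 1) := by positivity
  have hc2 : c ^ 2 = ((k : ℝ) * (R : ℝ) ^ (N - 1))⁻¹ := by
    rw [hcdef, div_pow, one_pow, Real.sq_sqrt hx.le, one_div]
  have hcard : (Fintype.card ((n : Fin (N + 1)) → Fin (ρ n)) : ℝ) = (R : ℝ) ^ (N - 1) := by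
    rw [Fintype.card_pi]
    simp only [Fintype.card_fin]
    rw [TTAux.prod_rho ρ hN hρ0 hρlast R hρmid]
    push_cast
    ring
  calc ∫ ω, ∑ κ, f ω κ ^ 2 ∂μ
      = ∫ ω, ∑ q : Fin k × (((((n : Fin N) → Fin (d n)) × ((n : Fin (N + 1)) → Fin (ρ n))))
            × ((((n : Fin N) → Fin (d n)) × ((n : Fin (N + 1)) → Fin (ρ n))))),
          (c ^ 2 * (X q.2.1.1 * X q.2.2.1)) *
            ∏ p : Fin k × TTAux.Sig d ρ,
              (G ω p.1 p.2.1 p.2.2.1 p.2.2.2.1 p.2.2.2.2) ^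
                (TTAux.mult d ρ k q.1 q.2.1.1 q.2.2.1 q.2.1.2 q.2.2.2 p) ∂μ := by
        congr 1; funext ω; exact key ω
    _ = ∑ q : Fin k × (((((n : Fin N) → Fin (d n)) × ((n : Fin (N + 1)) → Fin (ρ n))))
            × ((((n : Fin N) → Fin (d n)) × ((n : Fin (N + 1)) → Fin (ρ n))))),
          (c ^ 2 * (X q.2.1.1 * X q.2.2.1)) *
            ∫ ω, ∏ p : Fin k × TTAux.Sig d ρ,
              (G ω p.1 p.2.1 p.2.2.1 p.2.2.2.1 p.2.2.2.2) ^
                (TTAux.mult d ρ k q.1 q.2.1.1 q.2.2.1 q.2.1.2 q.2.2.2 p) ∂μ := by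
        rw [integral_finset_sum _ (fun q _ => (hIntProd _).const_mul _)]
        exact Finset.sum_congr rfl fun q _ => integral_const_mul _ _
    _ = ∑ q : Fin k × (((((n : Fin N) → Fin (d n)) × ((n : Fin (N + 1)) → Fin (ρ n))))
            × ((((n : Fin N) → Fin (d n)) × ((n : Fin (N + 1)) → Fin (ρ n))))),
          (c ^ 2 * (X q.2.1.1 * X q.2.2.1)) *
            (if q.2.1.1 = q.2.2.1 ∧ q.2.1.2 = q.2.2.2 then 1 else 0) := by
        refine Finset.sum_congr rfl fun q _ => ?_
        rw [hmom _, TTAux.parity_prod d ρ k hρlast q.1 q.2.1.1 q.2.2.1 q.2.1.2 q.2.2.2]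
    _ = (k : ℝ) * (((R : ℝ) ^ (N - 1)) * (c ^ 2 * ∑ i, X i ^ 2)) := by
        rw [Fintype.sum_prod_type]
        have hinner : ∀ κ : Fin k,
            (∑ w : (((n : Fin N) → Fin (d n)) × ((n : Fin (N + 1)) → Fin (ρ n)))
              × (((n : Fin N) → Fin (d n)) × ((n : Fin (N + 1)) → Fin (ρ n))),
              (c ^ 2 * (X w.1.1 * X w.2.1)) *
                (if w.1.1 = w.2.1 ∧ w.1.2 = w.2.2 then (1:ℝ) else 0))
            = ((R : ℝ) ^ (N - 1)) * (c ^ 2 * ∑ i, X i ^ 2) := by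
          intro κ
          rw [Fintype.sum_prod_type]
          have h1 : ∀ u : (((n : Fin N) → Fin (d n)) × ((n : Fin (N + 1)) → Fin (ρ n))),
              (∑ v : (((n : Fin N) → Fin (d n)) × ((n : Fin (N + 1)) → Fin (ρ n))),
                (c ^ 2 * (X u.1 * X v.1)) * (if u.1 = v.1 ∧ u.2 = v.2 then (1:ℝ) else 0))
              = c ^ 2 * (X u.1 * X u.1) := by
            intro u
            have hpe : ∀ v : (((n : Fin N) → Fin (d n)) × ((n : Fin (N + 1)) → Fin (ρ n))),
                (u.1 = v.1 ∧ u.2 = v.2) = (u = v) := fun v => (propext Prod.ext_iff).symm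
            simp only [hpe, mul_ite, mul_one, mul_zero, Finset.sum_ite_eq, Finset.mem_univ,
              if_true]
          simp only [h1]
          rw [Fintype.sum_prod_type]
          simp only [Finset.sum_const, Finset.card_univ, nsmul_eq_mul, hcard]
          conv_rhs => rw [Finset.mul_sum, Finset.mul_sum]
          exact Finset.sum_congr rfl fun i _ => by ring
        refine (Finset.sum_congr rfl fun κ _ => hinner κ).trans ?_
        rw [Finset.sum_const, Finset.card_univ, Fintype.card_fin, nsmul_eq_mul]
    _ = ∑ i, X i ^ 2 := by
        rw [hc2]
        field_simp
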